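/- Fix c > 0, b ∈ (0,c) and define g(α) = (log(c/(c−b)))^{−1/α} / Γ(1−1/α) for α > 1, where Γ is the Gamma function. If log(c/(c−b)) ≥ exp(−γ), where γ is the Euler–Mascheroni constant, then g is increasing in α on (1,∞). -/

import Mathlib

open Set

private lemma logGamma_key {s s' : ℝ} (hs : 0 < s) (hss' : s < s') (hs' : s' < 1) :
    Real.log (Real.Gamma s') - Real.log (Real.Gamma s) ≤
      -Real.eulerMascheroniConstant * (s' - s) := by
  set F : ℝ → ℝ := Real.log ∘ Real.Gamma with hF
  have hconv : ConvexOn ℝ (Ioi 0) F := Real.convexOn_log_Gamma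
  have hs'0 : (0:ℝ) < s' := hs.trans hss'
  -- derivative of log ∘ Gamma at 1 is -γ
  have hder : HasDerivAt F (-Real.eulerMascheroniConstant) 1 := by
    have := (Real.hasDerivAt_Gamma_one.log (by simp [Real.Gamma_one]))
    simpa [hF, Function.comp_def, Real.Gamma_one] using this
  have htend : Filter.Tendsto (slope F 1) (nhdsWithin 1 {(1:ℝ)}ᶜ)
      (nhds (-Real.eulerMascheroniConstant)) := hasDerivAt_iff_tendsto_slope.mp hder
  have htend' : Filter.Tendsto (slope F 1) (nhdsWithin 1 (Ioi 1))
      (nhds (-Real.eulerMascheroniConstant)) :=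
    htend.mono_left (nhdsWithin_mono _ (fun x hx => ne_of_gt hx))
  -- slope F s' 1 ≤ -γ
  have hsl1 : (F 1 - F s') / (1 - s') ≤ -Real.eulerMascheroniConstant := by
    refine ge_of_tendsto htend' ?_
    filter_upwards [self_mem_nhdsWithin] with y hy
    have hy1 : (1:ℝ) < y := hy
    have h2 := hconv.slope_mono_adjacent (mem_Ioi.mpr hs'0) (mem_Ioi.mpr (lt_trans one_pos hy1))
      hs' hy1
    calc (F 1 - F s') / (1 - s') ≤ (F y - F 1) / (y - 1) := h2
      _ = slope F 1 y := by rw [slope_def_field]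
  -- slope F s s' ≤ slope F s' 1
  have hsl2 : (F s' - F s) / (s' - s) ≤ (F 1 - F s') / (1 - s') :=
    hconv.slope_mono_adjacent (mem_Ioi.mpr hs) (mem_Ioi.mpr one_pos) hss' hs'
  have h3 : (F s' - F s) / (s' - s) ≤ -Real.eulerMascheroniConstant := hsl2.trans hsl1
  have hd : (0:ℝ) < s' - s := sub_pos.mpr hss'
  calc Real.log (Real.Gamma s') - Real.log (Real.Gamma s) = F s' - F s := rfl
    _ ≤ -Real.eulerMascheroniConstant * (s' - s) := by
        rw [div_le_iff₀ hd] at h3; linarith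

/-- `g(α) = (log (c/(c-b)))^{-1/α} / Γ(1 - 1/α)` is increasing in `α` on
`(1, ∞)` provided `log (c/(c-b)) ≥ exp (-γ)`, `γ` the Euler–Mascheroni constant. -/
theorem stmt10 (c b : ℝ) (hc : 0 < c) (hb : b ∈ Ioo 0 c)
    (h : Real.exp (-Real.eulerMascheroniConstant) ≤ Real.log (c / (c - b))) :
    MonotoneOn (fun α : ℝ => (Real.log (c / (c - b))) ^ (-(1 / α)) / Real.Gamma (1 - 1 / α))
      (Ioi 1) := by
  set L := Real.log (c / (c - b)) with hLdef
  have hL : 0 < L := lt_of_lt_of_le (Real.exp_pos _) h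
  intro α hα β hβ hαβ
  simp only
  have hα1 : (1:ℝ) < α := hα
  have hβ1 : (1:ℝ) < β := hβ
  have hα0 : (0:ℝ) < α := lt_trans one_pos hα1
  have hβ0 : (0:ℝ) < β := lt_trans one_pos hβ1
  have hsα : 0 < 1 - 1/α := by
    have : 1/α < 1 := by rw [div_lt_one hα0]; exact hα1
    linarith
  have hsβ : 0 < 1 - 1/β := by
    have : 1/β < 1 := by rw [div_lt_one hβ0]; exact hβ1
    linarith
  have hGα : 0 < Real.Gamma (1 - 1/α) := Real.Gamma_pos_of_pos hsα
  have hGβ : 0 < Real.Gamma (1 - 1/β) := Real.Gamma_pos_of_pos hsβ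
  rcases eq_or_lt_of_le hαβ with rfl | hlt
  · exact le_refl _
  · have hinv : 1/β < 1/α := by
      apply div_lt_div_of_pos_left one_pos hα0 hlt
    have hss' : 1 - 1/α < 1 - 1/β := by linarith
    have h1β : (0:ℝ) < 1/β := by positivity
    have hs'1 : 1 - 1/β < 1 := by linarith
    have key := logGamma_key hsα hss' (by
      have : 0 < 1/β := by positivity
      linarith)
    set d : ℝ := (1 - 1/β) - (1 - 1/α) with hd
    have hd0 : 0 < d := sub_pos.mpr hss'
    -- Γ(1-1/β) ≤ Γ(1-1/α) * exp (-γ d)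
    have hΓ : Real.Gamma (1 - 1/β) ≤ Real.Gamma (1 - 1/α) *
        Real.exp (-Real.eulerMascheroniConstant * d) := by
      have := Real.exp_le_exp.mpr (by linarith [key] :
        Real.log (Real.Gamma (1 - 1/β)) ≤
          Real.log (Real.Gamma (1 - 1/α)) + (-Real.eulerMascheroniConstant * d))
      rwa [Real.exp_add, Real.exp_log hGβ, Real.exp_log hGα] at this
    -- exp (-γ d) ≤ L ^ d
    have hE : Real.exp (-Real.eulerMascheroniConstant * d) ≤ L ^ d := by
      have h1 : Real.exp (-Real.eulerMascheroniConstant) ^ d ≤ L ^ d :=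
        Real.rpow_le_rpow (Real.exp_pos _).le h hd0.le
      calc Real.exp (-Real.eulerMascheroniConstant * d)
          = Real.exp (-Real.eulerMascheroniConstant) ^ d := by
            rw [Real.exp_mul]
        _ ≤ L ^ d := h1
    rw [div_le_div_iff₀ hGα hGβ]
    have hLsplit : L ^ (-(1/β)) = L ^ (-(1/α)) * L ^ d := by
      rw [← Real.rpow_add hL]; congr 1; simp [hd]; ring
    calc L ^ (-(1/α)) * Real.Gamma (1 - 1/β)
        ≤ L ^ (-(1/α)) * (Real.Gamma (1 - 1/α) * Real.exp (-Real.eulerMascheroniConstant * d)) :=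
          by apply mul_le_mul_of_nonneg_left hΓ (Real.rpow_nonneg hL.le _)
      _ ≤ L ^ (-(1/α)) * (Real.Gamma (1 - 1/α) * L ^ d) := by
          apply mul_le_mul_of_nonneg_left _ (Real.rpow_nonneg hL.le _)
          exact mul_le_mul_of_nonneg_left hE hGα.le
      _ = L ^ (-(1/β)) * Real.Gamma (1 - 1/α) := by rw [hLsplit]; ring
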